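/- Let μ be a probability measure with finite support on the power set of 𝒢 and let n ∈ ℕ. Define e_{2n}^det(μ) as the infimum, over all generalized deterministic algorithms (ψ, ν, φ) for S on 𝒢 satisfying ∫_𝒢 ν(g) μ(dg) ≤ 2n, of the average error ∫_𝒢 |S(g) − Ŝ(g)| μ(dg). Then every generalized randomized algorithm for S on 𝒢 with cost at most n has worst-case mean error sup_{g∈𝒢} E|S(g) − Ŝ(g,·)| at least (1/2)·e_{2n}^det(μ). -/

import Mathlib

open MeasureTheory ENNReal

/-- Sequential observations of a deterministic algorithm. -/
def detObs {A B : Type*} (oracle : A → B) (ψ : List B → A) : ℕ → List B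
  | 0 => []
  | k + 1 => detObs oracle ψ k ++ [oracle (ψ (detObs oracle ψ k))]

/-- Sequential observations of a randomized algorithm. -/
def ranObs {A B Ω : Type*} (oracle : A → B) (ψ : List B → Ω → A) (ω : Ω) : ℕ → List B
  | 0 => []
  | k + 1 => ranObs oracle ψ ω k ++ [oracle (ψ (ranObs oracle ψ ω k) ω)]

lemma ranObs_eq_detObs {A B Ω : Type*} (oracle : A → B) (ψ : List B → Ω → A) (ω : Ω) (k : ℕ) :
    ranObs oracle ψ ω k = detObs oracle (fun l => ψ l ω) k := by
  induction k with
  | zero => rfl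
  | succ k ih => simp [ranObs, detObs, ih]

theorem statement7 {A B : Type*} (G : Set (A → B)) (hG : G.Nonempty) (S : (A → B) → ℝ)
    (s : Finset (A → B)) (w : (A → B) → ℝ)
    (hw0 : ∀ f ∈ s, 0 ≤ w f) (hw1 : ∑ f ∈ s, w f = 1) (hsupp : ∀ f ∈ s, f ∈ G)
    (n : ℕ) (hn : 0 < n)
    {Ω : Type*} [MeasurableSpace Ω] (P : Measure Ω) [IsProbabilityMeasure P]
    (ψ : List B → Ω → A) (ν : (A → B) → Ω → ℕ) (φ : List B → Ω → ℝ)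
    (hνmeas : ∀ f ∈ G, Measurable (ν f))
    (hSmeas : ∀ f ∈ G, Measurable (fun ω => φ (ranObs f ψ ω (ν f ω)) ω))
    (hcost : ∀ f ∈ G, ∫⁻ ω, (ν f ω : ENNReal) ∂P ≤ n) :
    ∀ δ : ℝ, 0 < δ → ∃ f ∈ G,
      ENNReal.ofReal
        ((1 / 2) *
          sInf {e : ℝ |
            ∃ (ψ' : List B → A) (ν' : (A → B) → ℕ) (φ' : List B → ℝ),
              (∑ f' ∈ s, w f' * (ν' f' : ℝ)) ≤ 2 * n ∧
              e = ∑ f' ∈ s, w f' * |S f' - φ' (detObs f' ψ' (ν' f'))|} - δ) ≤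
      ∫⁻ ω, ENNReal.ofReal |S f - φ (ranObs f ψ ω (ν f ω)) ω| ∂P := by
  classical
  intro δ hδ
  by_contra hcon
  push_neg at hcon
  set E : Set ℝ := {e : ℝ |
    ∃ (ψ' : List B → A) (ν' : (A → B) → ℕ) (φ' : List B → ℝ),
      (∑ f' ∈ s, w f' * (ν' f' : ℝ)) ≤ 2 * n ∧
      e = ∑ f' ∈ s, w f' * |S f' - φ' (detObs f' ψ' (ν' f'))|} with hEdef
  set I := sInf E with hIdef
  obtain ⟨f0, hf0⟩ := hG
  have hM0 : 0 < (1/2) * I - δ := by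
    have h := hcon f0 hf0
    have h0 : (0:ℝ≥0∞) < ENNReal.ofReal ((1/2) * I - δ) := lt_of_le_of_lt zero_le h
    exact ENNReal.ofReal_pos.mp h0
  have hIδ : 0 < I - δ := by linarith
  have hEbdd : BddBelow E := by
    refine ⟨0, fun e he => ?_⟩
    obtain ⟨ψ', ν', φ', _, rfl⟩ := he
    exact Finset.sum_nonneg fun f hf => mul_nonneg (hw0 f hf) (abs_nonneg _)
  -- measurability
  have herr : ∀ f ∈ s, Measurable fun ω => ENNReal.ofReal |S f - φ (ranObs f ψ ω (ν f ω)) ω| :=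
    fun f hf => ((measurable_const.sub (hSmeas f (hsupp f hf))).abs).ennreal_ofReal
  have hνm : ∀ f ∈ s, Measurable fun ω => ((ν f ω : ℕ) : ℝ≥0∞) :=
    fun f hf => Measurable.comp measurable_from_top (hνmeas f (hsupp f hf))
  set Y : Ω → ℝ≥0∞ :=
    fun ω => ∑ f ∈ s, ENNReal.ofReal (w f) * ENNReal.ofReal |S f - φ (ranObs f ψ ω (ν f ω)) ω|
    with hYdef
  set C : Ω → ℝ≥0∞ := fun ω => ∑ f ∈ s, ENNReal.ofReal (w f) * (ν f ω : ℝ≥0∞) with hCdef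
  have hYm : Measurable Y := Finset.measurable_sum _ fun f hf => (herr f hf).const_mul _
  have hCm : Measurable C := Finset.measurable_sum _ fun f hf => (hνm f hf).const_mul _
  have hwsum : ∑ f ∈ s, ENNReal.ofReal (w f) = 1 := by
    rw [← ENNReal.ofReal_sum_of_nonneg hw0, hw1, ENNReal.ofReal_one]
  have hYint : ∫⁻ ω, Y ω ∂P ≤ ENNReal.ofReal ((1/2) * I - δ) := by
    rw [hYdef]
    rw [lintegral_finset_sum _ (fun f hf => (herr f hf).const_mul _)]
    calc ∑ f ∈ s, ∫⁻ ω, ENNReal.ofReal (w f) * ENNReal.ofReal |S f - φ (ranObs f ψ ω (ν f ω)) ω| ∂P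
        = ∑ f ∈ s, ENNReal.ofReal (w f) * ∫⁻ ω, ENNReal.ofReal |S f - φ (ranObs f ψ ω (ν f ω)) ω| ∂P :=
          Finset.sum_congr rfl fun f hf => lintegral_const_mul _ (herr f hf)
      _ ≤ ∑ f ∈ s, ENNReal.ofReal (w f) * ENNReal.ofReal ((1/2) * I - δ) :=
          Finset.sum_le_sum fun f hf => mul_le_mul_right (le_of_lt (hcon f (hsupp f hf))) _
      _ = ENNReal.ofReal ((1/2) * I - δ) := by rw [← Finset.sum_mul, hwsum, one_mul]
  have hCint : ∫⁻ ω, C ω ∂P ≤ (n : ℝ≥0∞) := by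
    rw [hCdef]
    rw [lintegral_finset_sum _ (fun f hf => (hνm f hf).const_mul _)]
    calc ∑ f ∈ s, ∫⁻ ω, ENNReal.ofReal (w f) * (ν f ω : ℝ≥0∞) ∂P
        = ∑ f ∈ s, ENNReal.ofReal (w f) * ∫⁻ ω, (ν f ω : ℝ≥0∞) ∂P :=
          Finset.sum_congr rfl fun f hf => lintegral_const_mul _ (hνm f hf)
      _ ≤ ∑ f ∈ s, ENNReal.ofReal (w f) * (n : ℝ≥0∞) :=
          Finset.sum_le_sum fun f hf => mul_le_mul_right (hcost f (hsupp f hf)) _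
      _ = (n : ℝ≥0∞) := by rw [← Finset.sum_mul, hwsum, one_mul]
  set T : ℝ≥0∞ := ENNReal.ofReal (I - δ) with hTdef
  have hT0 : T ≠ 0 := by simp [hTdef, ENNReal.ofReal_eq_zero]; linarith
  have hTtop : T ≠ ⊤ := ENNReal.ofReal_ne_top
  have hnne : ((n : ℝ≥0∞)) ≠ 0 := by exact_mod_cast hn.ne'
  have hntop : ((n : ℝ≥0∞)) ≠ ⊤ := ENNReal.natCast_ne_top n
  have h2n0 : (2 * (n : ℝ≥0∞)) ≠ 0 := by simp [hnne]
  have h2ntop : (2 * (n : ℝ≥0∞)) ≠ ⊤ := ENNReal.mul_ne_top (by norm_num) hntop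
  have hhalf : (n : ℝ≥0∞) * (2 * (n : ℝ≥0∞))⁻¹ = 2⁻¹ := by
    rw [ENNReal.mul_inv (Or.inl (by norm_num)) (Or.inl (by norm_num))]
    rw [mul_comm (2⁻¹ : ℝ≥0∞) _, ← mul_assoc, ENNReal.mul_inv_cancel hnne hntop, one_mul]
  have hWlt : ∫⁻ ω, (Y ω * T⁻¹ + C ω * (2 * (n : ℝ≥0∞))⁻¹) ∂P < 1 := by
    rw [lintegral_add_left (hYm.mul_const _)]
    rw [lintegral_mul_const' _ _ (ENNReal.inv_ne_top.mpr hT0)]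
    rw [lintegral_mul_const' _ _ (ENNReal.inv_ne_top.mpr h2n0)]
    have hb1 : (∫⁻ ω, Y ω ∂P) * T⁻¹ ≤ ENNReal.ofReal ((1/2) * I - δ) * T⁻¹ :=
      mul_le_mul_left hYint _
    have hb2 : (∫⁻ ω, C ω ∂P) * (2 * (n : ℝ≥0∞))⁻¹ ≤ (n : ℝ≥0∞) * (2 * (n : ℝ≥0∞))⁻¹ :=
      mul_le_mul_left hCint _
    have key : ENNReal.ofReal ((1/2) * I - δ) * T⁻¹ + (n : ℝ≥0∞) * (2 * (n : ℝ≥0∞))⁻¹ < 1 := by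
      rw [hhalf]
      have hq : ENNReal.ofReal ((1/2) * I - δ) * T⁻¹ = ENNReal.ofReal (((1/2) * I - δ) / (I - δ)) := by
        rw [ENNReal.ofReal_div_of_pos hIδ, hTdef]; rfl
      rw [hq]
      have hlt : ((1/2) * I - δ) / (I - δ) < 1/2 := by
        rw [div_lt_iff₀ hIδ]; linarith
      have : ENNReal.ofReal (((1/2) * I - δ) / (I - δ)) < ENNReal.ofReal (1/2) :=
        (ENNReal.ofReal_lt_ofReal_iff (by norm_num)).mpr hlt
      have h12 : ENNReal.ofReal ((1:ℝ)/2) = 2⁻¹ := by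
        rw [ENNReal.ofReal_div_of_pos (by norm_num), ENNReal.ofReal_one,
          ENNReal.ofReal_ofNat, one_div]
      calc ENNReal.ofReal (((1/2) * I - δ) / (I - δ)) + 2⁻¹
          < ENNReal.ofReal (1/2) + 2⁻¹ := by
            exact ENNReal.add_lt_add_right (by norm_num) this
        _ = 1 := by rw [h12, ENNReal.inv_two_add_inv_two]
    exact lt_of_le_of_lt (add_le_add hb1 hb2) key
  obtain ⟨ω, hω⟩ : ∃ ω, Y ω * T⁻¹ + C ω * (2 * (n : ℝ≥0∞))⁻¹ < 1 := by
    by_contra h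
    push_neg at h
    have h1 : (1 : ℝ≥0∞) ≤ ∫⁻ ω, (Y ω * T⁻¹ + C ω * (2 * (n : ℝ≥0∞))⁻¹) ∂P := by
      calc (1 : ℝ≥0∞) = ∫⁻ _, (1:ℝ≥0∞) ∂P := by simp
        _ ≤ _ := lintegral_mono h
    exact absurd (lt_of_le_of_lt h1 hWlt) (lt_irrefl _)
  have hYω : Y ω < T := by
    have h1 : Y ω * T⁻¹ < 1 := lt_of_le_of_lt le_self_add hω
    rw [← div_eq_mul_inv] at h1
    have := (ENNReal.div_lt_iff (Or.inl hT0) (Or.inl hTtop)).mp h1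
    simpa using this
  have hCω : C ω < 2 * (n : ℝ≥0∞) := by
    have h1 : C ω * (2 * (n : ℝ≥0∞))⁻¹ < 1 := lt_of_le_of_lt le_add_self hω
    rw [← div_eq_mul_inv] at h1
    have := (ENNReal.div_lt_iff (Or.inl h2n0) (Or.inl h2ntop)).mp h1
    simpa using this
  -- convert to real statements
  have hYreal : Y ω = ENNReal.ofReal (∑ f ∈ s, w f * |S f - φ (ranObs f ψ ω (ν f ω)) ω|) := by
    rw [ENNReal.ofReal_sum_of_nonneg (fun f hf => mul_nonneg (hw0 f hf) (abs_nonneg _))]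
    exact Finset.sum_congr rfl fun f hf => (ENNReal.ofReal_mul (hw0 f hf)).symm
  have hCreal : C ω = ENNReal.ofReal (∑ f ∈ s, w f * ((ν f ω : ℝ))) := by
    rw [ENNReal.ofReal_sum_of_nonneg (fun f hf => mul_nonneg (hw0 f hf) (Nat.cast_nonneg _))]
    refine Finset.sum_congr rfl fun f hf => ?_
    rw [ENNReal.ofReal_mul (hw0 f hf), ENNReal.ofReal_natCast]
  have herrlt : (∑ f ∈ s, w f * |S f - φ (ranObs f ψ ω (ν f ω)) ω|) < I - δ := by
    rw [hYreal, hTdef] at hYω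
    exact (ENNReal.ofReal_lt_ofReal_iff hIδ).mp hYω
  have hcost' : (∑ f ∈ s, w f * ((ν f ω : ℝ))) ≤ 2 * n := by
    rw [hCreal] at hCω
    have h2 : (2 * (n : ℝ≥0∞)) = ENNReal.ofReal (2 * (n:ℝ)) := by
      rw [ENNReal.ofReal_mul (by norm_num), ENNReal.ofReal_ofNat, ENNReal.ofReal_natCast]
    rw [h2] at hCω
    have := (ENNReal.ofReal_lt_ofReal_iff (by positivity)).mp hCω
    linarith
  have hmem : (∑ f ∈ s, w f * |S f - φ (ranObs f ψ ω (ν f ω)) ω|) ∈ E := by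
    refine ⟨fun l => ψ l ω, fun f => ν f ω, fun l => φ l ω, hcost', ?_⟩
    exact Finset.sum_congr rfl fun f hf => by rw [ranObs_eq_detObs]
  have hle : I ≤ ∑ f ∈ s, w f * |S f - φ (ranObs f ψ ω (ν f ω)) ω| := csInf_le hEbdd hmem
  linarith
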